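/- arXiv:2001.05128 — 10 statements merged into one kernel-verified Lean document; each statement's English description precedes it below -/
import Mathlib

section
/- Let H, H₀ be Hilbert spaces and (Ω, μ) a measure space. Suppose {A_α} and {Ψ_α} are families in B(H, H₀) such that α ↦ A_α h and α ↦ Ψ_α h are measurable for every h ∈ H, and there exist b, d > 0 with ∫ ‖A_α h‖² dμ ≤ b‖h‖² and ∫ ‖Ψ_α h‖² dμ ≤ d‖h‖² for all h ∈ H. Then for every h, g ∈ H, |∫ ⟨A_α h, Ψ_α g⟩ dμ(α)| ≤ √(bd) ‖h‖ ‖g‖, and consequently there is a bounded linear operator S_{A,Ψ} : H → H with ‖S_{A,Ψ}‖ ≤ √(bd) satisfying ⟨S_{A,Ψ} h, g⟩ = ∫ ⟨A_α h, Ψ_α g⟩ dμ(α) for all h, g ∈ H. -/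
open MeasureTheory

variable {𝕜 : Type*} [RCLike 𝕜]

local notation "⟪" x ", " y "⟫" => @inner 𝕜 _ _ x y

/-- Cauchy–Schwarz bound for the weak frame integral and existence of the
bounded frame operator `S_{A,Ψ}` with `‖S_{A,Ψ}‖ ≤ √(bd)`. -/
theorem extension_stmt0
    {H H₀ : Type*} [NormedAddCommGroup H] [InnerProductSpace 𝕜 H] [CompleteSpace H]
    [NormedAddCommGroup H₀] [InnerProductSpace 𝕜 H₀] [CompleteSpace H₀]
    {Ω : Type*} [MeasurableSpace Ω] (μ : Measure Ω)
    (A Ψ : Ω → H →L[𝕜] H₀)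
    (hAm : ∀ h : H, AEStronglyMeasurable (fun α => A α h) μ)
    (hΨm : ∀ h : H, AEStronglyMeasurable (fun α => Ψ α h) μ)
    (b d : ℝ) (hb : 0 < b) (hd : 0 < d)
    (hAi : ∀ h : H, Integrable (fun α => ‖A α h‖ ^ 2) μ)
    (hΨi : ∀ h : H, Integrable (fun α => ‖Ψ α h‖ ^ 2) μ)
    (hA : ∀ h : H, ∫ α, ‖A α h‖ ^ 2 ∂μ ≤ b * ‖h‖ ^ 2)
    (hΨ : ∀ h : H, ∫ α, ‖Ψ α h‖ ^ 2 ∂μ ≤ d * ‖h‖ ^ 2) :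
    (∀ h g : H, ‖∫ α, ⟪A α h, Ψ α g⟫ ∂μ‖ ≤ Real.sqrt (b * d) * ‖h‖ * ‖g‖) ∧
    ∃ S : H →L[𝕜] H, ‖S‖ ≤ Real.sqrt (b * d) ∧
      ∀ h g : H, ⟪S h, g⟫ = ∫ α, ⟪A α h, Ψ α g⟫ ∂μ := by
  -- L² membership
  have hAmem : ∀ h : H, MemLp (fun α => A α h) 2 μ := fun h =>
    (memLp_two_iff_integrable_sq_norm (hAm h)).2 (hAi h)
  have hΨmem : ∀ h : H, MemLp (fun α => Ψ α h) 2 μ := fun h =>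
    (memLp_two_iff_integrable_sq_norm (hΨm h)).2 (hΨi h)
  -- the pointwise inner product is integrable
  have hint : ∀ h g : H, Integrable (fun α => ⟪A α h, Ψ α g⟫) μ := by
    intro h g
    have := L2.integrable_inner (𝕜 := 𝕜) ((hAmem h).toLp _) ((hΨmem g).toLp _)
    refine this.congr ?_
    filter_upwards [(hAmem h).coeFn_toLp, (hΨmem g).coeFn_toLp] with α hα hβ
    rw [hα, hβ]
  -- the integral equals the L² inner product
  have hieq : ∀ h g : H,
      (∫ α, ⟪A α h, Ψ α g⟫ ∂μ) = ⟪(hAmem h).toLp _, (hΨmem g).toLp _⟫ := by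
    intro h g
    rw [L2.inner_def]
    refine integral_congr_ae ?_
    filter_upwards [(hAmem h).coeFn_toLp, (hΨmem g).coeFn_toLp] with α hα hβ
    rw [hα, hβ]
  -- norms of the L² elements
  have hnormsq : ∀ (f : Ω → H₀) (hf : MemLp f 2 μ),
      ‖hf.toLp f‖ ^ 2 = ∫ α, ‖f α‖ ^ 2 ∂μ := by
    intro f hf
    have hi : Integrable (fun α => ⟪f α, f α⟫) μ := by
      have := L2.integrable_inner (𝕜 := 𝕜) (hf.toLp f) (hf.toLp f)
      refine this.congr ?_
      filter_upwards [hf.coeFn_toLp] with α hα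
      rw [hα]
    rw [@norm_sq_eq_re_inner 𝕜, L2.inner_def]
    have h1 : (∫ α, ⟪(hf.toLp f : Lp H₀ 2 μ) α, (hf.toLp f : Lp H₀ 2 μ) α⟫ ∂μ)
        = ∫ α, ⟪f α, f α⟫ ∂μ := by
      refine integral_congr_ae ?_
      filter_upwards [hf.coeFn_toLp] with α hα
      rw [hα]
    rw [h1, ← integral_re hi]
    refine integral_congr_ae (Filter.Eventually.of_forall fun α => ?_)
    simp [inner_self_eq_norm_sq]
  have hnormA : ∀ h : H, ‖(hAmem h).toLp _‖ ≤ Real.sqrt b * ‖h‖ := by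
    intro h
    have h1 : ‖(hAmem h).toLp _‖ ^ 2 ≤ b * ‖h‖ ^ 2 := by
      rw [hnormsq _ (hAmem h)]; exact hA h
    calc ‖(hAmem h).toLp _‖ = Real.sqrt (‖(hAmem h).toLp (fun α => A α h)‖ ^ 2) :=
          (Real.sqrt_sq (norm_nonneg _)).symm
      _ ≤ Real.sqrt (b * ‖h‖ ^ 2) := Real.sqrt_le_sqrt h1
      _ = Real.sqrt b * ‖h‖ := by
          rw [Real.sqrt_mul hb.le, Real.sqrt_sq (norm_nonneg _)]
  have hnormΨ : ∀ g : H, ‖(hΨmem g).toLp _‖ ≤ Real.sqrt d * ‖g‖ := by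
    intro g
    have h1 : ‖(hΨmem g).toLp _‖ ^ 2 ≤ d * ‖g‖ ^ 2 := by
      rw [hnormsq _ (hΨmem g)]; exact hΨ g
    calc ‖(hΨmem g).toLp _‖ = Real.sqrt (‖(hΨmem g).toLp (fun α => Ψ α g)‖ ^ 2) :=
          (Real.sqrt_sq (norm_nonneg _)).symm
      _ ≤ Real.sqrt (d * ‖g‖ ^ 2) := Real.sqrt_le_sqrt h1
      _ = Real.sqrt d * ‖g‖ := by
          rw [Real.sqrt_mul hd.le, Real.sqrt_sq (norm_nonneg _)]
  -- main bound
  have key : ∀ h g : H, ‖∫ α, ⟪A α h, Ψ α g⟫ ∂μ‖ ≤ Real.sqrt (b * d) * ‖h‖ * ‖g‖ := by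
    intro h g
    rw [hieq h g]
    calc ‖⟪(hAmem h).toLp _, (hΨmem g).toLp _⟫‖
        ≤ ‖(hAmem h).toLp (fun α => A α h)‖ * ‖(hΨmem g).toLp (fun α => Ψ α g)‖ :=
          norm_inner_le_norm _ _
      _ ≤ (Real.sqrt b * ‖h‖) * (Real.sqrt d * ‖g‖) := by
          apply mul_le_mul (hnormA h) (hnormΨ g) (norm_nonneg _) (by positivity)
      _ = Real.sqrt (b * d) * ‖h‖ * ‖g‖ := by
          rw [Real.sqrt_mul hb.le]; ring
  refine ⟨key, ?_⟩
  -- the bounded functional g ↦ ∫ ⟪A α h, Ψ α g⟫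
  have sqnn : (0:ℝ) ≤ Real.sqrt (b * d) := Real.sqrt_nonneg _
  let φ : H → H →L[𝕜] 𝕜 := fun h =>
    LinearMap.mkContinuous
      { toFun := fun g => ∫ α, ⟪A α h, Ψ α g⟫ ∂μ
        map_add' := fun g g' => by
          rw [← integral_add (hint h g) (hint h g')]
          exact integral_congr_ae (Filter.Eventually.of_forall fun α => by
            simp [inner_add_right])
        map_smul' := fun c g => by
          simp only [RingHom.id_apply, ← integral_smul]
          exact integral_congr_ae (Filter.Eventually.of_forall fun α => by
            simp [inner_smul_right, smul_eq_mul]) }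
      (Real.sqrt (b * d) * ‖h‖)
      (fun g => by simpa [mul_assoc] using key h g)
  have hφ : ∀ h g, φ h g = ∫ α, ⟪A α h, Ψ α g⟫ ∂μ := fun h g => rfl
  have hφnorm : ∀ h, ‖φ h‖ ≤ Real.sqrt (b * d) * ‖h‖ := fun h =>
    LinearMap.mkContinuous_norm_le _ (by positivity) _
  -- the operator
  let S0 : H →ₗ[𝕜] H :=
    { toFun := fun h => (InnerProductSpace.toDual 𝕜 H).symm (φ h)
      map_add' := fun h h' => by
        show (InnerProductSpace.toDual 𝕜 H).symm (φ (h + h'))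
            = (InnerProductSpace.toDual 𝕜 H).symm (φ h) + (InnerProductSpace.toDual 𝕜 H).symm (φ h')
        have heq : φ (h + h') = φ h + φ h' := by
          ext g
          rw [ContinuousLinearMap.add_apply, hφ, hφ, hφ, ← integral_add (hint h g) (hint h' g)]
          exact integral_congr_ae (Filter.Eventually.of_forall fun α => by
            simp [inner_add_left])
        rw [heq, map_add]
      map_smul' := fun c h => by
        show (InnerProductSpace.toDual 𝕜 H).symm (φ (c • h))
            = c • (InnerProductSpace.toDual 𝕜 H).symm (φ h)
        have heq : φ (c • h) = (starRingEnd 𝕜) c • φ h := by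
          ext g
          rw [ContinuousLinearMap.smul_apply, hφ, hφ, smul_eq_mul, ← smul_eq_mul,
            ← integral_smul]
          exact integral_congr_ae (Filter.Eventually.of_forall fun α => by
            simp [inner_smul_left, smul_eq_mul])
        rw [heq, LinearIsometryEquiv.map_smulₛₗ]
        simp }
  refine ⟨S0.mkContinuous (Real.sqrt (b * d)) (fun h => ?_), ?_, fun h g => ?_⟩
  · show ‖(InnerProductSpace.toDual 𝕜 H).symm (φ h)‖ ≤ _
    rw [LinearIsometryEquiv.norm_map]
    exact hφnorm h
  · exact LinearMap.mkContinuous_norm_le _ sqnn _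
  · show ⟪(InnerProductSpace.toDual 𝕜 H).symm (φ h), g⟫ = _
    rw [InnerProductSpace.toDual_symm_apply]
    exact hφ h g
end

section
/- Let ({A_α}, {Ψ_α}) be a continuous operator-valued frame in B(H, H₀). The set of all bounded left-inverses of θ_A : H → L²(Ω, H₀) is exactly { S_{A,Ψ}^{-1} θ_Ψ* + U (I - θ_A S_{A,Ψ}^{-1} θ_Ψ*) : U ∈ B(L²(Ω, H₀), H) }. -/
open MeasureTheory ContinuousLinearMap

variable {𝕜 : Type*} [RCLike 𝕜]

/-- the bounded left-inverses of the analysis operator `θ_A` are exactly the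
operators `S_{A,Ψ}⁻¹ θ_Ψ* + U (I - θ_A S_{A,Ψ}⁻¹ θ_Ψ*)` for `U ∈ B(L²(Ω,H₀), H)`. -/
theorem extension_stmt6
    {H H₀ : Type*} [NormedAddCommGroup H] [InnerProductSpace 𝕜 H] [CompleteSpace H]
    [NormedAddCommGroup H₀] [InnerProductSpace 𝕜 H₀] [CompleteSpace H₀]
    {Ω : Type*} [MeasurableSpace Ω] (μ : Measure Ω)
    (θA θΨ : H →L[𝕜] Lp H₀ 2 μ)
    (S Sinv : H →L[𝕜] H)
    (hSdef : S = (adjoint θΨ).comp θA)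
    (hSdef' : S = (adjoint θA).comp θΨ)
    (hpos : S.IsPositive)
    (h1 : S.comp Sinv = ContinuousLinearMap.id 𝕜 H)
    (h2 : Sinv.comp S = ContinuousLinearMap.id 𝕜 H) :
    ∀ L : Lp H₀ 2 μ →L[𝕜] H,
      L.comp θA = ContinuousLinearMap.id 𝕜 H ↔
      ∃ U : Lp H₀ 2 μ →L[𝕜] H,
        L = Sinv.comp (adjoint θΨ) +
            U.comp (ContinuousLinearMap.id 𝕜 (Lp H₀ 2 μ) -
              θA.comp (Sinv.comp (adjoint θΨ))) := by
  intro L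
  constructor
  · intro hL
    refine ⟨L, ?_⟩
    ext x
    have hLθA : ∀ y, L (θA y) = y := fun y =>
      congrArg (fun T : H →L[𝕜] H => T y) hL
    simp [ContinuousLinearMap.comp_apply, hLθA]
  · rintro ⟨U, rfl⟩
    ext x
    have hS : (adjoint θΨ) (θA x) = S x := by rw [hSdef]; rfl
    have hSinvS : Sinv (S x) = x := congrArg (fun T : H →L[𝕜] H => T x) h2
    simp [ContinuousLinearMap.comp_apply, hS, hSinvS]
end

section
/- Let ({A_α}, {Ψ_α}) be a Riesz continuous operator-valued frame, i.e. a continuous operator-valued frame with P_{A,Ψ} = θ_A S_{A,Ψ}^{-1} θ_Ψ* = I on L²(Ω, H₀). If two continuous operator-valued frames ({B_α},{Φ_α}) and ({C_α},{Ξ_α}) are both duals of ({A_α},{Ψ_α}) (i.e. θ_Φ* θ_A = θ_B* θ_Ψ = I and θ_Ξ* θ_A = θ_C* θ_Ψ = I), then B_α = C_α and Φ_α = Ξ_α for all α ∈ Ω. -/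
open MeasureTheory ContinuousLinearMap

variable {𝕜 : Type*} [RCLike 𝕜]

/-- a Riesz continuous operator-valued frame (`P_{A,Ψ} = I` on `L²(Ω,H₀)`)
has a unique dual: any two dual continuous operator-valued frames coincide. -/
theorem extension_stmt8
    {H H₀ : Type*} [NormedAddCommGroup H] [InnerProductSpace 𝕜 H] [CompleteSpace H]
    [NormedAddCommGroup H₀] [InnerProductSpace 𝕜 H₀] [CompleteSpace H₀]
    {Ω : Type*} [MeasurableSpace Ω] (μ : Measure Ω)
    (A Ψ B Φ C Ξ : Ω → H →L[𝕜] H₀)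
    (θA θΨ θB θΦ θC θΞ : H →L[𝕜] Lp H₀ 2 μ)
    (hθB : ∀ (h : H) (α : Ω), (θB h : Lp H₀ 2 μ) α = B α h)
    (hθΦ : ∀ (h : H) (α : Ω), (θΦ h : Lp H₀ 2 μ) α = Φ α h)
    (hθC : ∀ (h : H) (α : Ω), (θC h : Lp H₀ 2 μ) α = C α h)
    (hθΞ : ∀ (h : H) (α : Ω), (θΞ h : Lp H₀ 2 μ) α = Ξ α h)
    (S Sinv : H →L[𝕜] H)
    (hSdef : S = (adjoint θΨ).comp θA)
    (hpos : S.IsPositive)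
    (h1 : S.comp Sinv = ContinuousLinearMap.id 𝕜 H)
    (h2 : Sinv.comp S = ContinuousLinearMap.id 𝕜 H)
    -- the Riesz condition `P_{A,Ψ} = I_{L²(Ω,H₀)}`
    (hRiesz : θA.comp (Sinv.comp (adjoint θΨ)) = ContinuousLinearMap.id 𝕜 (Lp H₀ 2 μ))
    -- `({B_α},{Φ_α})` is a dual of `({A_α},{Ψ_α})`
    (hd1 : (adjoint θΦ).comp θA = ContinuousLinearMap.id 𝕜 H)
    (hd2 : (adjoint θB).comp θΨ = ContinuousLinearMap.id 𝕜 H)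
    -- `({C_α},{Ξ_α})` is a dual of `({A_α},{Ψ_α})`
    (hd3 : (adjoint θΞ).comp θA = ContinuousLinearMap.id 𝕜 H)
    (hd4 : (adjoint θC).comp θΨ = ContinuousLinearMap.id 𝕜 H) :
    (∀ α : Ω, B α = C α) ∧ (∀ α : Ω, Φ α = Ξ α) := by

  -- key: any `θB` with `θB* θΨ = I` equals `θA ∘ Sinv`
  have keyB : ∀ θ : H →L[𝕜] Lp H₀ 2 μ,
      (adjoint θ).comp θΨ = ContinuousLinearMap.id 𝕜 H → θ = θA.comp Sinv := by
    intro θ hθ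
    have h' : (adjoint θΨ).comp θ = ContinuousLinearMap.id 𝕜 H := by
      have := congrArg ContinuousLinearMap.adjoint hθ
      simpa [adjoint_comp, adjoint_adjoint, adjoint_id] using this
    calc θ = (θA.comp (Sinv.comp (adjoint θΨ))).comp θ := by rw [hRiesz, id_comp]
      _ = (θA.comp Sinv).comp ((adjoint θΨ).comp θ) := by
          simp [ContinuousLinearMap.comp_assoc]
      _ = θA.comp Sinv := by rw [h', comp_id]
  -- key: any `θΦ` with `θΦ* θA = I` equals `θΨ ∘ adjoint Sinv`
  have hRiesz' : θΨ.comp ((adjoint Sinv).comp (adjoint θA))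
      = ContinuousLinearMap.id 𝕜 (Lp H₀ 2 μ) := by
    have := congrArg ContinuousLinearMap.adjoint hRiesz
    simpa [adjoint_comp, adjoint_adjoint, adjoint_id, ContinuousLinearMap.comp_assoc]
      using this
  have keyΦ : ∀ θ : H →L[𝕜] Lp H₀ 2 μ,
      (adjoint θ).comp θA = ContinuousLinearMap.id 𝕜 H →
      θ = θΨ.comp (adjoint Sinv) := by
    intro θ hθ
    have h' : (adjoint θA).comp θ = ContinuousLinearMap.id 𝕜 H := by
      have := congrArg ContinuousLinearMap.adjoint hθ
      simpa [adjoint_comp, adjoint_adjoint, adjoint_id] using this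
    calc θ = (θΨ.comp ((adjoint Sinv).comp (adjoint θA))).comp θ := by
          rw [hRiesz', id_comp]
      _ = (θΨ.comp (adjoint Sinv)).comp ((adjoint θA).comp θ) := by
          simp [ContinuousLinearMap.comp_assoc]
      _ = θΨ.comp (adjoint Sinv) := by rw [h', comp_id]
  have hBC : θB = θC := (keyB θB hd2).trans (keyB θC hd4).symm
  have hΦΞ : θΦ = θΞ := (keyΦ θΦ hd1).trans (keyΦ θΞ hd3).symm
  constructor
  · intro α
    ext h
    rw [← hθB h α, ← hθC h α, hBC]
  · intro α
    ext h
    rw [← hθΦ h α, ← hθΞ h α, hΦΞ]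
end

section
/- Let ({A_α},{Ψ_α}) and ({B_α},{Φ_α}) be Parseval continuous operator-valued frames (θ_Ψ* θ_A = I and θ_Φ* θ_B = I) that are orthogonal (θ_Φ* θ_A = θ_B* θ_Ψ = 0). If C, D, E, F ∈ B(H) satisfy C*E + D*F = I_H, then the family ({A_α C + B_α D}, {Ψ_α E + Φ_α F}) is a Parseval continuous operator-valued frame, i.e. θ_{ΨE+ΦF}* θ_{AC+BD} = I_H. -/
open MeasureTheory ContinuousLinearMap

variable {𝕜 : Type*} [RCLike 𝕜]

/-- if `({A_α},{Ψ_α})` and `({B_α},{Φ_α})` are orthogonal Parseval continuous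
operator-valued frames and `C*E + D*F = I`, then `({A_α C + B_α D}, {Ψ_α E + Φ_α F})` is a
Parseval continuous operator-valued frame (using `θ_{AC+BD} = θ_A C + θ_B D` and
`θ_{ΨE+ΦF} = θ_Ψ E + θ_Φ F`). -/
theorem extension_stmt9
    {H H₀ : Type*} [NormedAddCommGroup H] [InnerProductSpace 𝕜 H] [CompleteSpace H]
    [NormedAddCommGroup H₀] [InnerProductSpace 𝕜 H₀] [CompleteSpace H₀]
    {Ω : Type*} [MeasurableSpace Ω] (μ : Measure Ω)
    (θA θB θΨ θΦ : H →L[𝕜] Lp H₀ 2 μ)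
    -- Parseval conditions
    (hP1 : (adjoint θΨ).comp θA = ContinuousLinearMap.id 𝕜 H)
    (hP2 : (adjoint θΦ).comp θB = ContinuousLinearMap.id 𝕜 H)
    -- orthogonality conditions
    (ho1 : (adjoint θΦ).comp θA = 0)
    (ho2 : (adjoint θB).comp θΨ = 0)
    (C D E F : H →L[𝕜] H)
    (hCDEF : (adjoint C).comp E + (adjoint D).comp F = ContinuousLinearMap.id 𝕜 H) :
    (adjoint (θΨ.comp E + θΦ.comp F)).comp (θA.comp C + θB.comp D) =
      ContinuousLinearMap.id 𝕜 H := by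
  have h2 : (adjoint θΨ).comp θB = 0 := by
    have := congrArg adjoint ho2
    simpa [adjoint_comp, adjoint_adjoint] using this
  ext x
  have e1 := DFunLike.congr_fun hP1 (C x)
  have e2 := DFunLike.congr_fun h2 (D x)
  have e3 := DFunLike.congr_fun ho1 (C x)
  have e4 := DFunLike.congr_fun hP2 (D x)
  have h3 : (adjoint E).comp C + (adjoint F).comp D = ContinuousLinearMap.id 𝕜 H := by
    have := congrArg adjoint hCDEF
    simpa [adjoint_comp, adjoint_adjoint, map_add, adjoint_id] using this
  have e5 := DFunLike.congr_fun h3 x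
  simp only [coe_comp', Function.comp_apply, id_apply, FunLike.coe_zero, Pi.zero_apply] at e1 e2 e3 e4
  simp only [coe_comp', Function.comp_apply, id_apply, add_apply] at e5
  simp only [map_add, adjoint_comp, coe_comp', Function.comp_apply, add_apply, map_add,
    id_apply]
  rw [e1, e2, e3, e4]
  simpa using e5
end

section
/- Let ({A_α},{Ψ_α}) and ({B_α},{Φ_α}) be continuous operator-valued frames in B(H, H₀) that are orthogonal (θ_Φ* θ_A = θ_B* θ_Ψ = 0). Then the direct-sum family ({A_α ⊕ B_α}, {Ψ_α ⊕ Φ_α}) in B(H ⊕ H, H₀), where (A_α ⊕ B_α)(h ⊕ g) = A_α h + B_α g, is a continuous operator-valued frame for H ⊕ H, with frame operator S_{A⊕B, Ψ⊕Φ} = S_{A,Ψ} ⊕ S_{B,Φ}. If moreover both frames are Parseval, the direct sum is Parseval. -/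
open MeasureTheory ContinuousLinearMap

variable {𝕜 : Type*} [RCLike 𝕜]

local notation "⟪" x ", " y "⟫" => @inner 𝕜 _ _ x y

/-- two orthogonal continuous operator-valued frames are disjoint: the
direct-sum family `({A_α ⊕ B_α}, {Ψ_α ⊕ Φ_α})` on `H ⊕ H` is a continuous operator-valued
frame whose frame operator is `S_{A,Ψ} ⊕ S_{B,Φ}`; if both are Parseval so is the sum. -/
theorem extension_stmt10
    {H H₀ : Type*} [NormedAddCommGroup H] [InnerProductSpace 𝕜 H] [CompleteSpace H]
    [NormedAddCommGroup H₀] [InnerProductSpace 𝕜 H₀] [CompleteSpace H₀]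
    {Ω : Type*} [MeasurableSpace Ω] (μ : Measure Ω)
    (A B Ψ Φ : Ω → H →L[𝕜] H₀)
    (SA SB : H →L[𝕜] H)
    (hSA : ∀ h g : H, ⟪SA h, g⟫ = ∫ α, ⟪A α h, Ψ α g⟫ ∂μ)
    (hSB : ∀ h g : H, ⟪SB h, g⟫ = ∫ α, ⟪B α h, Φ α g⟫ ∂μ)
    (hposA : SA.IsPositive) (hposB : SB.IsPositive)
    (hinvA : IsUnit SA) (hinvB : IsUnit SB)
    -- orthogonality (weakly): `θ_Φ* θ_A = 0 = θ_B* θ_Ψ`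
    (ho1 : ∀ h g : H, ∫ α, ⟪A α h, Φ α g⟫ ∂μ = (0 : 𝕜))
    (ho2 : ∀ h g : H, ∫ α, ⟪B α h, Ψ α g⟫ ∂μ = (0 : 𝕜))
    (hi1 : ∀ h g : H, Integrable (fun α => (⟪A α h, Ψ α g⟫ : 𝕜)) μ)
    (hi2 : ∀ h g : H, Integrable (fun α => (⟪A α h, Φ α g⟫ : 𝕜)) μ)
    (hi3 : ∀ h g : H, Integrable (fun α => (⟪B α h, Ψ α g⟫ : 𝕜)) μ)
    (hi4 : ∀ h g : H, Integrable (fun α => (⟪B α h, Φ α g⟫ : 𝕜)) μ) :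
    ∃ S : WithLp 2 (H × H) →L[𝕜] WithLp 2 (H × H),
      (∀ p q : WithLp 2 (H × H),
        ⟪S p, q⟫ =
          ∫ α, ⟪A α (WithLp.equiv 2 (H × H) p).1 + B α (WithLp.equiv 2 (H × H) p).2,
                Ψ α (WithLp.equiv 2 (H × H) q).1 + Φ α (WithLp.equiv 2 (H × H) q).2⟫ ∂μ) ∧
      (∀ p : WithLp 2 (H × H),
        WithLp.equiv 2 (H × H) (S p) =
          (SA (WithLp.equiv 2 (H × H) p).1, SB (WithLp.equiv 2 (H × H) p).2)) ∧
      S.IsPositive ∧ IsUnit S ∧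
      (SA = ContinuousLinearMap.id 𝕜 H → SB = ContinuousLinearMap.id 𝕜 H →
        S = ContinuousLinearMap.id 𝕜 (WithLp 2 (H × H))) := by
  classical
  set e : WithLp 2 (H × H) ≃L[𝕜] H × H := WithLp.prodContinuousLinearEquiv 2 𝕜 H H with he
  set S : WithLp 2 (H × H) →L[𝕜] WithLp 2 (H × H) :=
    (e.symm : H × H →L[𝕜] WithLp 2 (H × H)) ∘L (SA.prodMap SB) ∘L
      (e : WithLp 2 (H × H) →L[𝕜] H × H) with hS
  have hSapp : ∀ p : WithLp 2 (H × H),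
      WithLp.equiv 2 (H × H) (S p) =
        (SA (WithLp.equiv 2 (H × H) p).1, SB (WithLp.equiv 2 (H × H) p).2) := by
    intro p; rfl
  have hfst : ∀ p : WithLp 2 (H × H), (S p).ofLp.1 = SA p.ofLp.1 := fun p => rfl
  have hsnd : ∀ p : WithLp 2 (H × H), (S p).ofLp.2 = SB p.ofLp.2 := fun p => rfl
  have hinner : ∀ p q : WithLp 2 (H × H), ⟪S p, q⟫ = ⟪SA p.ofLp.1, q.ofLp.1⟫ + ⟪SB p.ofLp.2, q.ofLp.2⟫ := by
    intro p q
    rw [WithLp.prod_inner_apply, hfst, hsnd]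
  refine ⟨S, ?_, hSapp, ?_, ?_, ?_⟩
  · intro p q
    have expand : ∀ α : Ω,
        (⟪A α (WithLp.equiv 2 (H × H) p).1 + B α (WithLp.equiv 2 (H × H) p).2,
          Ψ α (WithLp.equiv 2 (H × H) q).1 + Φ α (WithLp.equiv 2 (H × H) q).2⟫ : 𝕜)
        = ⟪A α p.ofLp.1, Ψ α q.ofLp.1⟫ + ⟪A α p.ofLp.1, Φ α q.ofLp.2⟫ + (⟪B α p.ofLp.2, Ψ α q.ofLp.1⟫ + ⟪B α p.ofLp.2, Φ α q.ofLp.2⟫) := by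
      intro α
      simp only [WithLp.equiv_apply, inner_add_add_self, inner_add_left,
        inner_add_right]
      ring
    rw [hinner]
    have hf12 : Integrable (fun α => (⟪A α p.ofLp.1, Ψ α q.ofLp.1⟫ + ⟪A α p.ofLp.1, Φ α q.ofLp.2⟫ : 𝕜)) μ :=
      (hi1 p.ofLp.1 q.ofLp.1).add (hi2 p.ofLp.1 q.ofLp.2)
    have hf34 : Integrable (fun α => (⟪B α p.ofLp.2, Ψ α q.ofLp.1⟫ + ⟪B α p.ofLp.2, Φ α q.ofLp.2⟫ : 𝕜)) μ :=
      (hi3 p.ofLp.2 q.ofLp.1).add (hi4 p.ofLp.2 q.ofLp.2)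
    have key : ∫ α, ((⟪A α p.ofLp.1, Ψ α q.ofLp.1⟫ + ⟪A α p.ofLp.1, Φ α q.ofLp.2⟫)
          + (⟪B α p.ofLp.2, Ψ α q.ofLp.1⟫ + ⟪B α p.ofLp.2, Φ α q.ofLp.2⟫) : 𝕜) ∂μ
        = (∫ α, (⟪A α p.ofLp.1, Ψ α q.ofLp.1⟫ : 𝕜) ∂μ + ∫ α, (⟪A α p.ofLp.1, Φ α q.ofLp.2⟫ : 𝕜) ∂μ)
          + (∫ α, (⟪B α p.ofLp.2, Ψ α q.ofLp.1⟫ : 𝕜) ∂μ + ∫ α, (⟪B α p.ofLp.2, Φ α q.ofLp.2⟫ : 𝕜) ∂μ) := by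
      rw [integral_add hf12 hf34, integral_add (hi1 p.ofLp.1 q.ofLp.1) (hi2 p.ofLp.1 q.ofLp.2),
        integral_add (hi3 p.ofLp.2 q.ofLp.1) (hi4 p.ofLp.2 q.ofLp.2)]
    have congr1 : (∫ α, ⟪A α (WithLp.equiv 2 (H × H) p).1 + B α (WithLp.equiv 2 (H × H) p).2,
          Ψ α (WithLp.equiv 2 (H × H) q).1 + Φ α (WithLp.equiv 2 (H × H) q).2⟫ ∂μ : 𝕜)
        = ∫ α, ((⟪A α p.ofLp.1, Ψ α q.ofLp.1⟫ + ⟪A α p.ofLp.1, Φ α q.ofLp.2⟫)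
          + (⟪B α p.ofLp.2, Ψ α q.ofLp.1⟫ + ⟪B α p.ofLp.2, Φ α q.ofLp.2⟫) : 𝕜) ∂μ :=
      integral_congr_ae (Filter.Eventually.of_forall fun α => expand α)
    rw [congr1, key, hSA, hSB, ho1, ho2]
    ring
  · constructor
    · intro p q
      have symA := hposA.1 p.ofLp.1 q.ofLp.1
      have symB := hposB.1 p.ofLp.2 q.ofLp.2
      have lhs : (⟪S p, q⟫ : 𝕜) = ⟪SA p.ofLp.1, q.ofLp.1⟫ + ⟪SB p.ofLp.2, q.ofLp.2⟫ := hinner p q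
      have rhs : (⟪p, S q⟫ : 𝕜) = ⟪p.ofLp.1, SA q.ofLp.1⟫ + ⟪p.ofLp.2, SB q.ofLp.2⟫ := by
        rw [WithLp.prod_inner_apply, hfst, hsnd]
      simpa only [ContinuousLinearMap.coe_coe, lhs, rhs] using congrArg₂ (· + ·) symA symB
    · intro p
      have h1 := hposA.2 p.ofLp.1
      have h2 := hposB.2 p.ofLp.2
      simp only [reApplyInnerSelf] at h1 h2 ⊢
      rw [hinner, map_add]
      exact add_nonneg h1 h2
  · obtain ⟨uA, hA⟩ := hinvA
    obtain ⟨uB, hB⟩ := hinvB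
    set TA : H →L[𝕜] H := ↑uA⁻¹ with hTA
    set TB : H →L[𝕜] H := ↑uB⁻¹ with hTB
    have hA1 : ∀ x, SA (TA x) = x := by
      intro x
      have : ((uA : H →L[𝕜] H) * TA) x = (1 : H →L[𝕜] H) x := by rw [uA.mul_inv]
      rwa [hA] at this
    have hA2 : ∀ x, TA (SA x) = x := by
      intro x
      have : (TA * (uA : H →L[𝕜] H)) x = (1 : H →L[𝕜] H) x := by rw [uA.inv_mul]
      rwa [hA] at this
    have hB1 : ∀ x, SB (TB x) = x := by
      intro x
      have : ((uB : H →L[𝕜] H) * TB) x = (1 : H →L[𝕜] H) x := by rw [uB.mul_inv]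
      rwa [hB] at this
    have hB2 : ∀ x, TB (SB x) = x := by
      intro x
      have : (TB * (uB : H →L[𝕜] H)) x = (1 : H →L[𝕜] H) x := by rw [uB.inv_mul]
      rwa [hB] at this
    set T : WithLp 2 (H × H) →L[𝕜] WithLp 2 (H × H) :=
      (e.symm : H × H →L[𝕜] WithLp 2 (H × H)) ∘L (TA.prodMap TB) ∘L
        (e : WithLp 2 (H × H) →L[𝕜] H × H) with hT
    refine isUnit_iff_exists.mpr ⟨T, ?_, ?_⟩
    · ext p
      show S (T p) = p
      have h1 : (S (T p)).ofLp.1 = p.ofLp.1 := by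
        rw [hfst]; exact hA1 p.ofLp.1
      have h2 : (S (T p)).ofLp.2 = p.ofLp.2 := by
        rw [hsnd]; exact hB1 p.ofLp.2
      exact (WithLp.ext_iff (p := 2)).mpr (Prod.ext h1 h2)
    · ext p
      show T (S p) = p
      have h1 : (T (S p)).ofLp.1 = p.ofLp.1 := by
        show TA ((S p).ofLp.1) = p.ofLp.1
        rw [hfst]; exact hA2 p.ofLp.1
      have h2 : (T (S p)).ofLp.2 = p.ofLp.2 := by
        show TB ((S p).ofLp.2) = p.ofLp.2
        rw [hsnd]; exact hB2 p.ofLp.2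
      exact (WithLp.ext_iff (p := 2)).mpr (Prod.ext h1 h2)
  · intro h1 h2
    ext p
    show S p = p
    refine (WithLp.ext_iff (p := 2)).mpr (Prod.ext ?_ ?_)
    · rw [hfst, h1]; rfl
    · rw [hsnd, h2]; rfl
end

section
/- Let {x_α} and {τ_α} be families of vectors in a Hilbert space H forming a continuous frame, i.e. h ↦ (α ↦ ⟨h, x_α⟩) and h ↦ (α ↦ ⟨h, τ_α⟩) define bounded operators θ_x, θ_τ : H → L²(Ω, 𝕂), and S_{x,τ} := θ_τ* θ_x is positive and invertible. If h ∈ H has representations h = ∫ f(α) x_α dμ(α) = ∫ g(α) τ_α dμ(α) (weakly) for measurable scalar functions f, g, then ∫ f(α) conj(g(α)) dμ(α) = ∫ ⟨h, S_{x,τ}^{-1}τ_α⟩⟨S_{x,τ}^{-1}x_α, h⟩ dμ(α) + ∫ (f(α) − ⟨h, S_{x,τ}^{-1}τ_α⟩)(conj(g(α)) − ⟨S_{x,τ}^{-1}x_α, h⟩) dμ(α). -/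
open MeasureTheory ContinuousLinearMap

variable {𝕜 : Type*} [RCLike 𝕜]

local notation "⟪" x ", " y "⟫" => @inner 𝕜 _ _ x y

private lemma memℒp_conj' {Ω : Type*} [MeasurableSpace Ω] {μ : Measure Ω} {p : ENNReal}
    {f : Ω → 𝕜} (hf : MemLp f p μ) :
    MemLp (fun α => (starRingEnd 𝕜) (f α)) p μ :=
  ⟨RCLike.continuous_conj.comp_aestronglyMeasurable hf.1, by
    rw [eLpNorm_congr_norm_ae (Filter.Eventually.of_forall fun α => RCLike.norm_conj (f α))]
    exact hf.2⟩

private lemma integrable_mul' {Ω : Type*} [MeasurableSpace Ω] {μ : Measure Ω}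
    {f g : Ω → 𝕜} (hf : MemLp f 2 μ) (hg : MemLp g 2 μ) :
    Integrable (fun α => f α * g α) μ := by
  rw [← memLp_one_iff_integrable]
  have : (1 : ENNReal) / 1 = 1 / 2 + 1 / 2 := by
    simp only [one_div, inv_one]
    exact ENNReal.inv_two_add_inv_two.symm
  exact MemLp.smul (E := 𝕜) (𝕜 := 𝕜) (r := 1) hg hf

/-- if `h = ∫ f(α) x_α dμ = ∫ g(α) τ_α dμ` (weakly) for a continuous frame
`({x_α},{τ_α})` with frame operator `S`, then
`∫ f ḡ = ∫ ⟨h, S⁻¹τ_α⟩⟨S⁻¹x_α, h⟩ + ∫ (f − ⟨h, S⁻¹τ_α⟩)(ḡ − ⟨S⁻¹x_α, h⟩)`.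
(Here the paper's inner product `⟨u,v⟩` is rendered as `⟪v, u⟫` in Mathlib's convention.) -/
theorem extension_stmt11
    {H : Type*} [NormedAddCommGroup H] [InnerProductSpace 𝕜 H] [CompleteSpace H]
    {Ω : Type*} [MeasurableSpace Ω] (μ : Measure Ω)
    (x τ : Ω → H)
    -- Bessel conditions for the two families
    (hx : ∀ u : H, MemLp (fun α => (⟪x α, u⟫ : 𝕜)) 2 μ)
    (hτ : ∀ u : H, MemLp (fun α => (⟪τ α, u⟫ : 𝕜)) 2 μ)
    (S Sinv : H →L[𝕜] H)
    -- `S = S_{x,τ} = S_{τ,x}` weakly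
    (hS : ∀ h u : H, ⟪u, S h⟫ = ∫ α, ⟪x α, h⟫ * ⟪u, τ α⟫ ∂μ)
    (hS' : ∀ h u : H, ⟪u, S h⟫ = ∫ α, ⟪τ α, h⟫ * ⟪u, x α⟫ ∂μ)
    (hpos : S.IsPositive)
    (h1 : S.comp Sinv = ContinuousLinearMap.id 𝕜 H)
    (h2 : Sinv.comp S = ContinuousLinearMap.id 𝕜 H)
    (h : H) (f g : Ω → 𝕜)
    (hfL2 : MemLp f 2 μ) (hgL2 : MemLp g 2 μ)
    -- `h = ∫ f(α) x_α dμ(α) = ∫ g(α) τ_α dμ(α)` in the weak sense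
    (hf : ∀ u : H, ⟪u, h⟫ = ∫ α, f α * ⟪u, x α⟫ ∂μ)
    (hg : ∀ u : H, ⟪u, h⟫ = ∫ α, g α * ⟪u, τ α⟫ ∂μ) :
    ∫ α, f α * (starRingEnd 𝕜) (g α) ∂μ =
      (∫ α, ⟪Sinv (τ α), h⟫ * ⟪h, Sinv (x α)⟫ ∂μ) +
      ∫ α, (f α - ⟪Sinv (τ α), h⟫) * ((starRingEnd 𝕜) (g α) - ⟪h, Sinv (x α)⟫) ∂μ := by
  -- self-adjointness of `S`
  have hsaS : ∀ u v : H, ⟪S u, v⟫ = ⟪u, S v⟫ := by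
    intro u v
    have hsa := hpos.isSelfAdjoint
    rw [isSelfAdjoint_iff'] at hsa
    conv_lhs => rw [← hsa]
    exact adjoint_inner_left S v u
  have hSinv : ∀ u : H, S (Sinv u) = u := fun u => by
    have := congrArg (fun T : H →L[𝕜] H => T u) h1
    simpa using this
  have hinvS : ∀ u : H, Sinv (S u) = u := fun u => by
    have := congrArg (fun T : H →L[𝕜] H => T u) h2
    simpa using this
  -- self-adjointness of `Sinv`
  have hsaI : ∀ u v : H, ⟪Sinv u, v⟫ = ⟪u, Sinv v⟫ := by
    intro u v
    calc ⟪Sinv u, v⟫ = ⟪Sinv u, S (Sinv v)⟫ := by rw [hSinv]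
      _ = ⟪S (Sinv u), Sinv v⟫ := (hsaS _ _).symm
      _ = ⟪u, Sinv v⟫ := by rw [hSinv]
  set k : H := Sinv h with hk
  have ea : ∀ α, ⟪Sinv (τ α), h⟫ = ⟪τ α, k⟫ := fun α => hsaI _ _
  have eb : ∀ α, ⟪h, Sinv (x α)⟫ = (starRingEnd 𝕜) ⟪x α, k⟫ := fun α => by
    rw [← inner_conj_symm h (Sinv (x α)), hsaI]
  simp only [ea, eb]
  -- integrability
  have ha2 : MemLp (fun α => (⟪τ α, k⟫ : 𝕜)) 2 μ := hτ k
  have hb2 : MemLp (fun α => (starRingEnd 𝕜) (⟪x α, k⟫ : 𝕜)) 2 μ := memℒp_conj' (hx k)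
  have hgc2 : MemLp (fun α => (starRingEnd 𝕜) (g α)) 2 μ := memℒp_conj' hgL2
  have i1 : Integrable (fun α => f α * (starRingEnd 𝕜) (g α)) μ := integrable_mul' hfL2 hgc2
  have i2 : Integrable (fun α => f α * (starRingEnd 𝕜) (⟪x α, k⟫ : 𝕜)) μ :=
    integrable_mul' hfL2 hb2
  have i3 : Integrable (fun α => (⟪τ α, k⟫ : 𝕜) * (starRingEnd 𝕜) (g α)) μ :=
    integrable_mul' ha2 hgc2
  have i4 : Integrable (fun α => (⟪τ α, k⟫ : 𝕜) * (starRingEnd 𝕜) (⟪x α, k⟫ : 𝕜)) μ :=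
    integrable_mul' ha2 hb2
  -- key integral evaluations
  have E1 : ∫ α, f α * (starRingEnd 𝕜) (⟪x α, k⟫ : 𝕜) ∂μ = ⟪k, h⟫ := by
    rw [show (fun α => f α * (starRingEnd 𝕜) (⟪x α, k⟫ : 𝕜)) = fun α => f α * ⟪k, x α⟫ by
      funext α; rw [inner_conj_symm]]
    exact (hf k).symm
  have E2 : ∫ α, (⟪τ α, k⟫ : 𝕜) * (starRingEnd 𝕜) (g α) ∂μ = ⟪k, h⟫ := by
    have : ∫ α, (starRingEnd 𝕜) (g α * ⟪k, τ α⟫) ∂μ = (starRingEnd 𝕜) ⟪k, h⟫ := by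
      rw [integral_conj, ← hg k]
    rw [inner_conj_symm] at this
    calc ∫ α, (⟪τ α, k⟫ : 𝕜) * (starRingEnd 𝕜) (g α) ∂μ
        = ∫ α, (starRingEnd 𝕜) (g α * ⟪k, τ α⟫) ∂μ := by
          congr 1; funext α; rw [map_mul, inner_conj_symm]; ring
      _ = ⟪h, k⟫ := this
      _ = ⟪k, h⟫ := by rw [hk, ← hsaI]
  have E3 : ∫ α, (⟪τ α, k⟫ : 𝕜) * (starRingEnd 𝕜) (⟪x α, k⟫ : 𝕜) ∂μ = ⟪k, h⟫ := by
    have := hS' k k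
    rw [hk, hSinv] at this
    rw [show (fun α => (⟪τ α, k⟫ : 𝕜) * (starRingEnd 𝕜) (⟪x α, k⟫ : 𝕜))
        = fun α => (⟪τ α, k⟫ : 𝕜) * ⟪k, x α⟫ by
      funext α; rw [inner_conj_symm]]
    rw [← hk] at this
    exact this.symm
  -- expand the second integral
  have expand : ∫ α, (f α - ⟪τ α, k⟫) * ((starRingEnd 𝕜) (g α) - (starRingEnd 𝕜) (⟪x α, k⟫ : 𝕜)) ∂μ
      = (∫ α, f α * (starRingEnd 𝕜) (g α) ∂μ) - (∫ α, f α * (starRingEnd 𝕜) (⟪x α, k⟫ : 𝕜) ∂μ)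
        - (∫ α, (⟪τ α, k⟫ : 𝕜) * (starRingEnd 𝕜) (g α) ∂μ)
        + ∫ α, (⟪τ α, k⟫ : 𝕜) * (starRingEnd 𝕜) (⟪x α, k⟫ : 𝕜) ∂μ := by
    rw [show (fun α => (f α - ⟪τ α, k⟫) * ((starRingEnd 𝕜) (g α) - (starRingEnd 𝕜) (⟪x α, k⟫ : 𝕜)))
        = fun α => (f α * (starRingEnd 𝕜) (g α) - f α * (starRingEnd 𝕜) (⟪x α, k⟫ : 𝕜)
            - (⟪τ α, k⟫ : 𝕜) * (starRingEnd 𝕜) (g α)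
            + (⟪τ α, k⟫ : 𝕜) * (starRingEnd 𝕜) (⟪x α, k⟫ : 𝕜)) by
      funext α; ring]
    have i12 : Integrable (fun α => f α * (starRingEnd 𝕜) (g α)
        - f α * (starRingEnd 𝕜) (⟪x α, k⟫ : 𝕜)) μ := i1.sub i2
    have i123 : Integrable (fun α => f α * (starRingEnd 𝕜) (g α)
        - f α * (starRingEnd 𝕜) (⟪x α, k⟫ : 𝕜)
        - (⟪τ α, k⟫ : 𝕜) * (starRingEnd 𝕜) (g α)) μ := i12.sub i3
    rw [integral_add i123 i4, integral_sub i12 i3, integral_sub i1 i2]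
  rw [expand, E1, E2, E3]
  ring
end

section
/- Let ({x_α}, {τ_α}) be a tight continuous frame for a finite-dimensional Hilbert space H of dimension m, i.e. S_{x,τ} = b·I_H for some b > 0. Then the extended variation formula holds: ∫∫ ⟨τ_α, x_β⟩⟨τ_β, x_α⟩ dμ(β) dμ(α) = (1/m)(∫ ⟨x_α, τ_α⟩ dμ(α))² = ∫∫ ⟨τ_α, τ_β⟩⟨x_β, x_α⟩ dμ(β) dμ(α). -/
open MeasureTheory ContinuousLinearMap

local notation "⟪" x ", " y "⟫" => @inner ℂ _ _ x y

/-- extended variation formula for a tight continuous frame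
(`S_{x,τ} = b·I`, `b > 0`) on an `m`-dimensional complex Hilbert space:
`∫∫ ⟨τ_α,x_β⟩⟨τ_β,x_α⟩ = (1/m)(∫ ⟨x_α,τ_α⟩)² = ∫∫ ⟨τ_α,τ_β⟩⟨x_β,x_α⟩`.
(The paper's `⟨u,v⟩` is `⟪v, u⟫` in Mathlib's convention.) -/
theorem extension_stmt15
    {H : Type*} [NormedAddCommGroup H] [InnerProductSpace ℂ H] [CompleteSpace H]
    [FiniteDimensional ℂ H] {m : ℕ} (hm : Module.finrank ℂ H = m) (hm0 : 0 < m)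
    {Ω : Type*} [MeasurableSpace Ω] (μ : Measure Ω)
    (x τ : Ω → H) (b : ℝ) (hb : 0 < b)
    -- tightness: `S_{x,τ} = b·I = S_{τ,x}` weakly
    (hS : ∀ h u : H, (b : ℂ) * ⟪u, h⟫ = ∫ α, ⟪x α, h⟫ * ⟪u, τ α⟫ ∂μ)
    (hS' : ∀ h u : H, (b : ℂ) * ⟪u, h⟫ = ∫ α, ⟪τ α, h⟫ * ⟪u, x α⟫ ∂μ)
    (hint : ∀ u v : H, Integrable (fun α => (⟪x α, u⟫ : ℂ) * ⟪v, τ α⟫) μ)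
    (hd : Integrable (fun α => (⟪τ α, x α⟫ : ℂ)) μ) :
    (∫ α, ∫ β, ⟪x β, τ α⟫ * ⟪x α, τ β⟫ ∂μ ∂μ =
      (1 / (m : ℂ)) * (∫ α, ⟪τ α, x α⟫ ∂μ) ^ 2) ∧
    (∫ α, ∫ β, ⟪x β, τ α⟫ * ⟪x α, τ β⟫ ∂μ ∂μ =
      ∫ α, ∫ β, ⟪τ β, τ α⟫ * ⟪x α, x β⟫ ∂μ ∂μ) := by
  classical
  set e : OrthonormalBasis (Fin m) ℂ H :=
    (stdOrthonormalBasis ℂ H).reindex (finCongr hm) with he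
  -- trace identity : ∫ ⟪τ α, x α⟫ = b * m
  have key : ∫ α, ⟪τ α, x α⟫ ∂μ = (b : ℂ) * m := by
    have h1 : ∀ α, (⟪τ α, x α⟫ : ℂ) = ∑ i, ⟪τ α, e i⟫ * ⟪e i, x α⟫ := fun α =>
      (e.sum_inner_mul_inner _ _).symm
    have hInt : ∀ i : Fin m, Integrable (fun α => (⟪τ α, e i⟫ : ℂ) * ⟪e i, x α⟫) μ := by
      intro i
      have h0 : Integrable (fun α => (starRingEnd ℂ) ((⟪x α, e i⟫ : ℂ) * ⟪e i, τ α⟫)) μ :=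
        (RCLike.conjLIE (K := ℂ)).integrable_comp_iff.mpr (hint (e i) (e i))
      convert h0 using 2 with α
      simp only [map_mul, inner_conj_symm]
      ring
    calc ∫ α, ⟪τ α, x α⟫ ∂μ = ∫ α, ∑ i, ⟪τ α, e i⟫ * ⟪e i, x α⟫ ∂μ := by
          simp_rw [h1]
      _ = ∑ i, ∫ α, ⟪τ α, e i⟫ * ⟪e i, x α⟫ ∂μ :=
          integral_finset_sum _ (fun i _ => hInt i)
      _ = ∑ i : Fin m, (b : ℂ) * ⟪e i, e i⟫ :=
          Finset.sum_congr rfl fun i _ => (hS' (e i) (e i)).symm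
      _ = (b : ℂ) * m := by
          have : ∀ i : Fin m, (⟪e i, e i⟫ : ℂ) = 1 := fun i => by
            simpa using (orthonormal_iff_ite.mp e.orthonormal i i)
          simp [this, Finset.sum_const, mul_comm]
  have inner1 : ∀ α, ∫ β, ⟪x β, τ α⟫ * ⟪x α, τ β⟫ ∂μ = (b : ℂ) * ⟪x α, τ α⟫ :=
    fun α => (hS (τ α) (x α)).symm
  have inner2 : ∀ α, ∫ β, ⟪τ β, τ α⟫ * ⟪x α, x β⟫ ∂μ = (b : ℂ) * ⟪x α, τ α⟫ :=
    fun α => (hS' (τ α) (x α)).symm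
  have hc : ∫ α, ⟪x α, τ α⟫ ∂μ = (b : ℂ) * m := by
    have h2 : (fun α => (⟪x α, τ α⟫ : ℂ)) = fun α => starRingEnd ℂ ⟪τ α, x α⟫ := by
      funext α; simp [inner_conj_symm]
    rw [h2, integral_conj, key]; simp
  have LHS : ∫ α, ∫ β, ⟪x β, τ α⟫ * ⟪x α, τ β⟫ ∂μ ∂μ = (b : ℂ) ^ 2 * m := by
    simp_rw [inner1]
    rw [integral_const_mul, hc]; ring
  have hmne : (m : ℂ) ≠ 0 := by exact_mod_cast hm0.ne'
  constructor
  · rw [LHS, key]; field_simp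
  · rw [LHS]; simp_rw [inner2]
    rw [integral_const_mul, hc]; ring
end

section
/- Suppose ({x_α}, {τ_α}) is a continuous frame for ℝ^m with bounds a, b such that ∫ ⟨h, x_α⟩⟨τ_α, g⟩ dμ(α) = ∫ ⟨g, x_α⟩⟨τ_α, h⟩ dμ(α) for all h, g ∈ ℝ^m. Then, viewing x_α, τ_α as vectors in ℂ^m, for every z ∈ ℂ^m one has a‖z‖² ≤ ∫ ⟨z, x_α⟩⟨τ_α, z⟩ dμ(α) ≤ b‖z‖²; in particular ({x_α}, {τ_α}) is a continuous frame for ℂ^m with the same bounds, and tightness/Parsevalness is preserved. -/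
open MeasureTheory

/-- a continuous frame `({x_α},{τ_α})` for `ℝ^m` with bounds `a, b` whose
frame-type form is symmetric is, after complexification, a continuous frame for `ℂ^m` with
the same bounds: `a‖z‖² ≤ ∫ ⟨z, x_α⟩⟨τ_α, z⟩ dμ ≤ b‖z‖²` for all `z ∈ ℂ^m` (the integral
being real), so tightness/Parsevalness is preserved.
(The paper's `⟨u,v⟩` is `⟪v, u⟫` in Mathlib's convention.) -/
theorem extension_stmt16
    {m : ℕ} {Ω : Type*} [MeasurableSpace Ω] (μ : Measure Ω)
    (x τ : Ω → EuclideanSpace ℝ (Fin m))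
    (a b : ℝ) (ha : 0 < a) (hb : 0 < b)
    (hint : ∀ h g : EuclideanSpace ℝ (Fin m),
      Integrable (fun α => inner (𝕜 := ℝ) (x α) h * inner (𝕜 := ℝ) g (τ α)) μ)
    -- frame bounds on ℝ^m: `a‖h‖² ≤ ∫ ⟨h,x_α⟩⟨τ_α,h⟩ dμ ≤ b‖h‖²`
    (hlow : ∀ h : EuclideanSpace ℝ (Fin m),
      a * ‖h‖ ^ 2 ≤ ∫ α, inner (𝕜 := ℝ) (x α) h * inner (𝕜 := ℝ) h (τ α) ∂μ)
    (hup : ∀ h : EuclideanSpace ℝ (Fin m),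
      ∫ α, inner (𝕜 := ℝ) (x α) h * inner (𝕜 := ℝ) h (τ α) ∂μ ≤ b * ‖h‖ ^ 2)
    -- symmetry: `∫ ⟨h,x_α⟩⟨τ_α,g⟩ dμ = ∫ ⟨g,x_α⟩⟨τ_α,h⟩ dμ`
    (hsym : ∀ h g : EuclideanSpace ℝ (Fin m),
      ∫ α, inner (𝕜 := ℝ) (x α) h * inner (𝕜 := ℝ) g (τ α) ∂μ =
        ∫ α, inner (𝕜 := ℝ) (x α) g * inner (𝕜 := ℝ) h (τ α) ∂μ)
    -- the complexified families
    (xC τC : Ω → EuclideanSpace ℂ (Fin m))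
    (hxC : ∀ (α : Ω) (i : Fin m), xC α i = ((x α i : ℝ) : ℂ))
    (hτC : ∀ (α : Ω) (i : Fin m), τC α i = ((τ α i : ℝ) : ℂ)) :
    ∀ z : EuclideanSpace ℂ (Fin m),
      a * ‖z‖ ^ 2 ≤ (∫ α, inner (𝕜 := ℂ) (xC α) z * inner (𝕜 := ℂ) z (τC α) ∂μ).re ∧
      (∫ α, inner (𝕜 := ℂ) (xC α) z * inner (𝕜 := ℂ) z (τC α) ∂μ).re ≤ b * ‖z‖ ^ 2 ∧
      (∫ α, inner (𝕜 := ℂ) (xC α) z * inner (𝕜 := ℂ) z (τC α) ∂μ).im = 0 := by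
  intro z
  set u : EuclideanSpace ℝ (Fin m) := WithLp.toLp 2 (fun i => (z i).re) with hu
  set v : EuclideanSpace ℝ (Fin m) := WithLp.toLp 2 (fun i => (z i).im) with hv
  have hz : ∀ i, z i = ((u i : ℝ) : ℂ) + ((v i : ℝ) : ℂ) * Complex.I :=
    fun i => (Complex.re_add_im (z i)).symm
  -- factor the two inners
  have hx1 : ∀ α, inner (𝕜 := ℂ) (xC α) z
      = ((inner (𝕜 := ℝ) (x α) u : ℝ) : ℂ) + ((inner (𝕜 := ℝ) (x α) v : ℝ) : ℂ) * Complex.I := by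
    intro α
    simp only [PiLp.inner_apply, RCLike.inner_apply, hxC, Complex.conj_ofReal, conj_trivial]
    push_cast
    rw [Finset.sum_mul, ← Finset.sum_add_distrib]
    refine Finset.sum_congr rfl fun i _ => ?_
    rw [hz i]; ring
  have hτ1 : ∀ α, inner (𝕜 := ℂ) z (τC α)
      = ((inner (𝕜 := ℝ) u (τ α) : ℝ) : ℂ) - ((inner (𝕜 := ℝ) v (τ α) : ℝ) : ℂ) * Complex.I := by
    intro α
    simp only [PiLp.inner_apply, RCLike.inner_apply, hτC, conj_trivial]
    push_cast
    rw [Finset.sum_mul, ← Finset.sum_sub_distrib]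
    refine Finset.sum_congr rfl fun i _ => ?_
    rw [hz i, map_add, map_mul, Complex.conj_ofReal, Complex.conj_ofReal, Complex.conj_I]
    ring
  set P : Ω → ℝ := fun α => inner (𝕜 := ℝ) (x α) u * inner (𝕜 := ℝ) u (τ α)
      + inner (𝕜 := ℝ) (x α) v * inner (𝕜 := ℝ) v (τ α) with hP
  set Q : Ω → ℝ := fun α => inner (𝕜 := ℝ) (x α) v * inner (𝕜 := ℝ) u (τ α)
      - inner (𝕜 := ℝ) (x α) u * inner (𝕜 := ℝ) v (τ α) with hQ
  have key : ∀ α, inner (𝕜 := ℂ) (xC α) z * inner (𝕜 := ℂ) z (τC α)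
      = ((P α : ℝ) : ℂ) + Complex.I * ((Q α : ℝ) : ℂ) := by
    intro α
    rw [hx1 α, hτ1 α]
    simp only [hP, hQ]
    push_cast
    apply Complex.ext <;> simp [Complex.mul_re, Complex.mul_im] <;> ring
  have hPi : Integrable P μ := ((hint u u).add (hint v v))
  have hQi : Integrable Q μ := ((hint v u).sub (hint u v))
  have hintval : (∫ α, inner (𝕜 := ℂ) (xC α) z * inner (𝕜 := ℂ) z (τC α) ∂μ)
      = ((∫ α, P α ∂μ : ℝ) : ℂ) + Complex.I * ((∫ α, Q α ∂μ : ℝ) : ℂ) := by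
    have hPi' : Integrable (fun α => ((P α : ℝ) : ℂ)) μ := hPi.ofReal
    have hQi' : Integrable (fun α => Complex.I * ((Q α : ℝ) : ℂ)) μ := (hQi.ofReal).const_mul _
    have h1 : ∫ α, ((P α : ℝ) : ℂ) ∂μ = ((∫ α, P α ∂μ : ℝ) : ℂ) := integral_ofReal
    have h2 : ∫ α, ((Q α : ℝ) : ℂ) ∂μ = ((∫ α, Q α ∂μ : ℝ) : ℂ) := integral_ofReal
    rw [show (fun α => inner (𝕜 := ℂ) (xC α) z * inner (𝕜 := ℂ) z (τC α))
        = fun α => ((P α : ℝ) : ℂ) + Complex.I * ((Q α : ℝ) : ℂ) from funext key]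
    rw [integral_add hPi' hQi', integral_const_mul, h1, h2]
  have hQ0 : (∫ α, Q α ∂μ) = 0 := by
    rw [hQ, integral_sub (hint v u) (hint u v), hsym v u, sub_self]
  have hnorm : ‖z‖ ^ 2 = ‖u‖ ^ 2 + ‖v‖ ^ 2 := by
    rw [PiLp.norm_sq_eq_of_L2 _ z, PiLp.norm_sq_eq_of_L2 _ u, PiLp.norm_sq_eq_of_L2 _ v,
      ← Finset.sum_add_distrib]
    refine Finset.sum_congr rfl fun i _ => ?_
    simp [hu, hv, Complex.sq_norm, RCLike.mul_self_norm, Complex.normSq_apply, Real.norm_eq_abs, sq_abs, sq]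
  have hPval : (∫ α, P α ∂μ) = (∫ α, inner (𝕜 := ℝ) (x α) u * inner (𝕜 := ℝ) u (τ α) ∂μ)
      + ∫ α, inner (𝕜 := ℝ) (x α) v * inner (𝕜 := ℝ) v (τ α) ∂μ := by
    rw [hP, integral_add (hint u u) (hint v v)]
  rw [hintval]
  simp only [Complex.add_re, Complex.ofReal_re, Complex.mul_re, Complex.I_re, Complex.I_im,
    Complex.ofReal_im, Complex.add_im, Complex.mul_im, hQ0]
  refine ⟨?_, ?_, by ring⟩
  · rw [hnorm]
    calc a * (‖u‖ ^ 2 + ‖v‖ ^ 2) = a * ‖u‖ ^ 2 + a * ‖v‖ ^ 2 := by ring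
    _ ≤ _ := by
        rw [hPval]; simp only [zero_mul, mul_zero, sub_zero, add_zero, mul_one]
        exact add_le_add (hlow u) (hlow v)
  · rw [hnorm, hPval]
    simp only [zero_mul, mul_zero, sub_zero, add_zero, mul_one]
    calc _ ≤ b * ‖u‖ ^ 2 + b * ‖v‖ ^ 2 := add_le_add (hup u) (hup v)
    _ = b * (‖u‖ ^ 2 + ‖v‖ ^ 2) := by ring
end

section
/- Let ({x_α},{τ_α}) and ({y_α},{ω_α}) be weak continuous frames for a Hilbert space H (frame operators S_{x,τ} and S_{y,ω} positive and invertible) that are orthogonal: ∫ ⟨h, x_α⟩ ω_α dμ(α) = 0 = ∫ ⟨h, τ_α⟩ y_α dμ(α) (weakly) for all h ∈ H. Then the family z_α := S_{x,τ}^{-1}x_α + S_{y,ω}^{-1}y_α, ρ_α := S_{x,τ}^{-1}τ_α + S_{y,ω}^{-1}ω_α is a weak continuous frame for H with frame operator S_{z,ρ} = S_{x,τ}^{-1} + S_{y,ω}^{-1}, and it is a common dual of both frames: ∫ ⟨h, x_α⟩ ρ_α dμ = ∫ ⟨h, τ_α⟩ z_α dμ = h and ∫ ⟨h, y_α⟩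 ρ_α dμ = ∫ ⟨h, ω_α⟩ z_α dμ = h for all h ∈ H. -/
open MeasureTheory ContinuousLinearMap

variable {𝕜 : Type*} [RCLike 𝕜]

local notation "⟪" x ", " y "⟫" => @inner 𝕜 _ _ x y

open RCLike

/-- Cauchy–Schwarz inequality for the semi-inner product induced by a positive operator. -/
lemma pos_op_cauchy_schwarz {H : Type*} [NormedAddCommGroup H] [InnerProductSpace 𝕜 H]
    [CompleteSpace H] (S : H →L[𝕜] H) (hS : S.IsPositive) (u v : H) :
    ‖(⟪S u, v⟫ : 𝕜)‖ * ‖(⟪S v, u⟫ : 𝕜)‖ ≤ re (⟪S u, u⟫ : 𝕜) * re (⟪S v, v⟫ : 𝕜) := by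
  have hsym0 := hS.1
  have hsym : ∀ a b : H, (⟪S a, b⟫ : 𝕜) = ⟪a, S b⟫ := fun a b => hsym0 a b
  let c : PreInnerProductSpace.Core 𝕜 H :=
  { inner := fun a b => ⟪S a, b⟫
    conj_inner_symm := fun a b => by
      simp only [inner_conj_symm]
      exact (hsym a b).symm
    re_inner_nonneg := fun a => hS.re_inner_nonneg_left a
    add_left := fun a b z => by simp [inner_add_left]
    smul_left := fun a b r => by simp [inner_smul_left] }
  exact InnerProductSpace.Core.inner_mul_inner_self_le (𝕜 := 𝕜) (F := H) (c := c) u v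

/-- The sum of an invertible positive operator and a positive operator is invertible. -/
lemma pos_add_isUnit {H : Type*} [NormedAddCommGroup H] [InnerProductSpace 𝕜 H] [CompleteSpace H]
    (S T Sinv : H →L[𝕜] H) (hS : S.IsPositive) (hT : T.IsPositive)
    (h1 : S.comp Sinv = ContinuousLinearMap.id 𝕜 H) :
    IsUnit (S + T) := by
  have hsym0 := hS.1
  have hsym : ∀ a b : H, (⟪S a, b⟫ : 𝕜) = ⟪a, S b⟫ := fun a b => hsym0 a b
  have h1' : ∀ v, S (Sinv v) = v := fun v => ContinuousLinearMap.ext_iff.mp h1 v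
  -- coercivity
  have hcoer : ∀ h : H, ‖h‖ ^ 2 ≤ ‖Sinv‖ * re (⟪(S + T) h, h⟫ : 𝕜) := by
    intro h
    have hST : re (⟪S h, h⟫ : 𝕜) ≤ re (⟪(S + T) h, h⟫ : 𝕜) := by
      have := hT.re_inner_nonneg_left h
      simp only [ContinuousLinearMap.add_apply, inner_add_left, map_add]
      linarith
    have hcs := pos_op_cauchy_schwarz (𝕜 := 𝕜) S hS (Sinv h) h
    have e1 : (⟪S (Sinv h), h⟫ : 𝕜) = ⟪h, h⟫ := by rw [h1']
    have e2 : (⟪S h, Sinv h⟫ : 𝕜) = ⟪h, h⟫ := by rw [hsym h (Sinv h), h1']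
    have e3 : re (⟪S (Sinv h), Sinv h⟫ : 𝕜) ≤ ‖Sinv‖ * ‖h‖ * ‖h‖ := by
      rw [h1']
      calc re (⟪h, Sinv h⟫ : 𝕜) ≤ ‖(⟪h, Sinv h⟫ : 𝕜)‖ := RCLike.re_le_norm _
        _ ≤ ‖h‖ * ‖Sinv h‖ := norm_inner_le_norm _ _
        _ ≤ ‖h‖ * (‖Sinv‖ * ‖h‖) := by
            have := Sinv.le_opNorm h
            have : ‖Sinv h‖ ≤ ‖Sinv‖ * ‖h‖ := this
            nlinarith [norm_nonneg h]
        _ = ‖Sinv‖ * ‖h‖ * ‖h‖ := by ring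
    rw [e1, e2] at hcs
    have e4 : ‖(⟪h, h⟫ : 𝕜)‖ = ‖h‖ ^ 2 := by
      rw [inner_self_eq_norm_sq_to_K]
      simp [norm_pow]
    rw [e4] at hcs
    have hpos0 : (0:ℝ) ≤ re (⟪S h, h⟫ : 𝕜) := hS.re_inner_nonneg_left h
    have hposST : (0:ℝ) ≤ re (⟪(S + T) h, h⟫ : 𝕜) := (hS.add hT).re_inner_nonneg_left h
    rcases eq_or_ne h 0 with rfl | hne
    · have hz : ((S + T) (0:H)) = 0 := map_zero _
      simp only [norm_zero, hz, inner_zero_left, map_zero, mul_zero]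
      norm_num
    · have hn : (0:ℝ) < ‖h‖ := norm_pos_iff.mpr hne
      have key : ‖h‖ ^ 2 * ‖h‖ ^ 2 ≤ (‖Sinv‖ * re (⟪(S + T) h, h⟫ : 𝕜)) * ‖h‖ ^ 2 := by
        have step1 : ‖h‖ ^ 2 * ‖h‖ ^ 2 ≤ (‖Sinv‖ * ‖h‖ * ‖h‖) * re (⟪S h, h⟫ : 𝕜) :=
          le_trans hcs (mul_le_mul_of_nonneg_right e3 hpos0)
        have step2 : (‖Sinv‖ * ‖h‖ * ‖h‖) * re (⟪S h, h⟫ : 𝕜)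
            ≤ (‖Sinv‖ * ‖h‖ * ‖h‖) * re (⟪(S + T) h, h⟫ : 𝕜) := by
          have hnn : (0:ℝ) ≤ ‖Sinv‖ * ‖h‖ * ‖h‖ := by positivity
          exact mul_le_mul_of_nonneg_left hST hnn
        calc ‖h‖ ^ 2 * ‖h‖ ^ 2 ≤ (‖Sinv‖ * ‖h‖ * ‖h‖) * re (⟪(S + T) h, h⟫ : 𝕜) :=
              le_trans step1 step2
          _ = (‖Sinv‖ * re (⟪(S + T) h, h⟫ : 𝕜)) * ‖h‖ ^ 2 := by ring
      have hp2 : (0:ℝ) < ‖h‖ ^ 2 := by positivity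
      exact (mul_le_mul_iff_left₀ hp2).mp key
  -- antilipschitz bound
  have hbound : ∀ h : H, ‖h‖ ≤ ‖Sinv‖ * ‖(S + T) h‖ := by
    intro h
    rcases eq_or_ne h 0 with rfl | hne
    · simp
    · have hn : (0:ℝ) < ‖h‖ := norm_pos_iff.mpr hne
      have : ‖h‖ ^ 2 ≤ ‖Sinv‖ * (‖(S + T) h‖ * ‖h‖) := by
        calc ‖h‖ ^ 2 ≤ ‖Sinv‖ * re (⟪(S + T) h, h⟫ : 𝕜) := hcoer h
          _ ≤ ‖Sinv‖ * (‖(S + T) h‖ * ‖h‖) := by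
              have : re (⟪(S + T) h, h⟫ : 𝕜) ≤ ‖(⟪(S + T) h, h⟫ : 𝕜)‖ := RCLike.re_le_norm _
              have h2 : ‖(⟪(S + T) h, h⟫ : 𝕜)‖ ≤ ‖(S + T) h‖ * ‖h‖ := norm_inner_le_norm _ _
              have := le_trans this h2
              exact mul_le_mul_of_nonneg_left this (norm_nonneg _)
      nlinarith [this, hn]
  have hanti : AntilipschitzWith ⟨‖Sinv‖, norm_nonneg _⟩ (S + T) :=
    (S + T).antilipschitz_of_bound (K := ⟨‖Sinv‖, norm_nonneg _⟩) hbound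
  -- dense range
  have hdense : (S + T).range.topologicalClosure = ⊤ := by
    rw [Submodule.topologicalClosure_eq_top_iff]
    rw [Submodule.eq_bot_iff]
    intro v hv
    have h0 : (⟪(S + T) v, v⟫ : 𝕜) = 0 :=
      (Submodule.mem_orthogonal _ v).mp hv ((S + T) v) (LinearMap.mem_range_self _ v)
    have : ‖v‖ ^ 2 ≤ 0 := by
      have := hcoer v
      rw [h0] at this
      simpa using this
    have : ‖v‖ = 0 := by nlinarith [norm_nonneg v]
    exact norm_eq_zero.mp this
  have hbij : Function.Bijective (S + T) :=
    ((S + T).bijective_iff_dense_range_and_antilipschitz).mpr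
      ⟨hdense, ⟨_, hanti⟩⟩
  let e := ContinuousLinearEquiv.ofBijective (S + T)
    (LinearMap.ker_eq_bot.mpr hbij.1) (LinearMap.range_eq_top.mpr hbij.2)
  have hce : ⇑e = ⇑(S + T) := ContinuousLinearEquiv.coeFn_ofBijective _ _ _
  refine ⟨⟨S + T, e.symm.toContinuousLinearMap, ?_, ?_⟩, rfl⟩
  · ext v
    simp only [ContinuousLinearMap.mul_apply, ContinuousLinearMap.one_apply,
      ContinuousLinearEquiv.coe_coe]
    rw [← hce]
    exact e.apply_symm_apply v
  · ext v
    simp only [ContinuousLinearMap.mul_apply, ContinuousLinearMap.one_apply,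
      ContinuousLinearEquiv.coe_coe]
    rw [← hce]
    exact e.symm_apply_apply v

/-- two orthogonal weak continuous frames `({x_α},{τ_α})` and `({y_α},{ω_α})`
admit the common dual weak continuous frame `z_α = S_{x,τ}⁻¹x_α + S_{y,ω}⁻¹y_α`,
`ρ_α = S_{x,τ}⁻¹τ_α + S_{y,ω}⁻¹ω_α`, whose frame operator is `S_{x,τ}⁻¹ + S_{y,ω}⁻¹`.
(The paper's `⟨u,v⟩` is `⟪v, u⟫` in Mathlib's convention; all integrals are weak.) -/
theorem extension_stmt18
    {H : Type*} [NormedAddCommGroup H] [InnerProductSpace 𝕜 H] [CompleteSpace H]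
    {Ω : Type*} [MeasurableSpace Ω] (μ : Measure Ω)
    (x τ y ω : Ω → H)
    (Sx SxInv Sy SyInv : H →L[𝕜] H)
    (hSx : ∀ h u : H, ⟪u, Sx h⟫ = ∫ α, ⟪x α, h⟫ * ⟪u, τ α⟫ ∂μ)
    (hSx' : ∀ h u : H, ⟪u, Sx h⟫ = ∫ α, ⟪τ α, h⟫ * ⟪u, x α⟫ ∂μ)
    (hSy : ∀ h u : H, ⟪u, Sy h⟫ = ∫ α, ⟪y α, h⟫ * ⟪u, ω α⟫ ∂μ)
    (hSy' : ∀ h u : H, ⟪u, Sy h⟫ = ∫ α, ⟪ω α, h⟫ * ⟪u, y α⟫ ∂μ)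
    (hposx : Sx.IsPositive) (hposy : Sy.IsPositive)
    (hx1 : Sx.comp SxInv = ContinuousLinearMap.id 𝕜 H)
    (hx2 : SxInv.comp Sx = ContinuousLinearMap.id 𝕜 H)
    (hy1 : Sy.comp SyInv = ContinuousLinearMap.id 𝕜 H)
    (hy2 : SyInv.comp Sy = ContinuousLinearMap.id 𝕜 H)
    -- orthogonality (weakly): `∫ ⟨h,x_α⟩ω_α dμ = 0 = ∫ ⟨h,τ_α⟩y_α dμ`
    (ho1 : ∀ h u : H, ∫ α, ⟪x α, h⟫ * ⟪u, ω α⟫ ∂μ = (0 : 𝕜))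
    (ho2 : ∀ h u : H, ∫ α, ⟪τ α, h⟫ * ⟪u, y α⟫ ∂μ = (0 : 𝕜))
    -- integrability of all cross pairings
    (hi1 : ∀ u v : H, Integrable (fun α => (⟪x α, u⟫ : 𝕜) * ⟪v, τ α⟫) μ)
    (hi2 : ∀ u v : H, Integrable (fun α => (⟪x α, u⟫ : 𝕜) * ⟪v, ω α⟫) μ)
    (hi3 : ∀ u v : H, Integrable (fun α => (⟪y α, u⟫ : 𝕜) * ⟪v, τ α⟫) μ)
    (hi4 : ∀ u v : H, Integrable (fun α => (⟪y α, u⟫ : 𝕜) * ⟪v, ω α⟫) μ) :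
    -- `(z, ρ)` is a weak continuous frame with frame operator `Sx⁻¹ + Sy⁻¹` …
    ((SxInv + SyInv).IsPositive ∧ IsUnit (SxInv + SyInv) ∧
      ∀ h u : H, ⟪u, (SxInv + SyInv) h⟫ =
        ∫ α, ⟪SxInv (x α) + SyInv (y α), h⟫ * ⟪u, SxInv (τ α) + SyInv (ω α)⟫ ∂μ) ∧
    -- … and it is a common dual of both frames
    (∀ h u : H,
      (∫ α, ⟪x α, h⟫ * ⟪u, SxInv (τ α) + SyInv (ω α)⟫ ∂μ = ⟪u, h⟫) ∧
      (∫ α, ⟪τ α, h⟫ * ⟪u, SxInv (x α) + SyInv (y α)⟫ ∂μ = ⟪u, h⟫) ∧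
      (∫ α, ⟪y α, h⟫ * ⟪u, SxInv (τ α) + SyInv (ω α)⟫ ∂μ = ⟪u, h⟫) ∧
      (∫ α, ⟪ω α, h⟫ * ⟪u, SxInv (x α) + SyInv (y α)⟫ ∂μ = ⟪u, h⟫)) := by
  -- basic consequences of invertibility
  have sxi : ∀ v : H, Sx (SxInv v) = v := fun v => by
    simpa using ContinuousLinearMap.ext_iff.mp hx1 v
  have isx : ∀ v : H, SxInv (Sx v) = v := fun v => by
    simpa using ContinuousLinearMap.ext_iff.mp hx2 v
  have syi : ∀ v : H, Sy (SyInv v) = v := fun v => by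
    simpa using ContinuousLinearMap.ext_iff.mp hy1 v
  have isy : ∀ v : H, SyInv (Sy v) = v := fun v => by
    simpa using ContinuousLinearMap.ext_iff.mp hy2 v
  -- the inverses are self-adjoint
  have hadjx : ContinuousLinearMap.adjoint SxInv = SxInv := by
    have hax : ContinuousLinearMap.adjoint Sx = Sx :=
      ContinuousLinearMap.isSelfAdjoint_iff'.mp hposx.isSelfAdjoint
    have had : (ContinuousLinearMap.adjoint SxInv).comp Sx = ContinuousLinearMap.id 𝕜 H := by
      have := congrArg ContinuousLinearMap.adjoint hx1
      rwa [ContinuousLinearMap.adjoint_comp, hax, ContinuousLinearMap.adjoint_id] at this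
    calc ContinuousLinearMap.adjoint SxInv
        = (ContinuousLinearMap.adjoint SxInv).comp (Sx.comp SxInv) := by
          rw [hx1, ContinuousLinearMap.comp_id]
      _ = ((ContinuousLinearMap.adjoint SxInv).comp Sx).comp SxInv := by
          rw [ContinuousLinearMap.comp_assoc]
      _ = SxInv := by rw [had, ContinuousLinearMap.id_comp]
  have hadjy : ContinuousLinearMap.adjoint SyInv = SyInv := by
    have hay : ContinuousLinearMap.adjoint Sy = Sy :=
      ContinuousLinearMap.isSelfAdjoint_iff'.mp hposy.isSelfAdjoint
    have had : (ContinuousLinearMap.adjoint SyInv).comp Sy = ContinuousLinearMap.id 𝕜 H := by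
      have := congrArg ContinuousLinearMap.adjoint hy1
      rwa [ContinuousLinearMap.adjoint_comp, hay, ContinuousLinearMap.adjoint_id] at this
    calc ContinuousLinearMap.adjoint SyInv
        = (ContinuousLinearMap.adjoint SyInv).comp (Sy.comp SyInv) := by
          rw [hy1, ContinuousLinearMap.comp_id]
      _ = ((ContinuousLinearMap.adjoint SyInv).comp Sy).comp SyInv := by
          rw [ContinuousLinearMap.comp_assoc]
      _ = SyInv := by rw [had, ContinuousLinearMap.id_comp]
  have symx : ∀ u v : H, (⟪SxInv u, v⟫ : 𝕜) = ⟪u, SxInv v⟫ := fun u v => by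
    conv_lhs => rw [← hadjx]
    exact ContinuousLinearMap.adjoint_inner_left SxInv v u
  have symy : ∀ u v : H, (⟪SyInv u, v⟫ : 𝕜) = ⟪u, SyInv v⟫ := fun u v => by
    conv_lhs => rw [← hadjy]
    exact ContinuousLinearMap.adjoint_inner_left SyInv v u
  -- positivity of the inverses
  have hpx : SxInv.IsPositive := by
    refine ⟨ContinuousLinearMap.isSelfAdjoint_iff_isSymmetric.mp (ContinuousLinearMap.isSelfAdjoint_iff'.mpr hadjx), fun v => ?_⟩
    show (0:ℝ) ≤ RCLike.re (⟪SxInv v, v⟫ : 𝕜)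
    have hv : (⟪SxInv v, v⟫ : 𝕜) = ⟪SxInv v, Sx (SxInv v)⟫ := by rw [sxi]
    rw [hv]
    exact hposx.re_inner_nonneg_right (SxInv v)
  have hpy : SyInv.IsPositive := by
    refine ⟨ContinuousLinearMap.isSelfAdjoint_iff_isSymmetric.mp (ContinuousLinearMap.isSelfAdjoint_iff'.mpr hadjy), fun v => ?_⟩
    show (0:ℝ) ≤ RCLike.re (⟪SyInv v, v⟫ : 𝕜)
    have hv : (⟪SyInv v, v⟫ : 𝕜) = ⟪SyInv v, Sy (SyInv v)⟫ := by rw [syi]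
    rw [hv]
    exact hposy.re_inner_nonneg_right (SyInv v)
  -- Integrability of conjugates
  have hci : ∀ (f : Ω → 𝕜), Integrable f μ →
      Integrable (fun α => (starRingEnd 𝕜) (f α)) μ := by
    intro f hf
    have h2 := (LinearIsometryEquiv.integrable_comp_iff (RCLike.conjLIE (K := 𝕜))).mpr hf
    simpa [RCLike.conjLIE_apply] using h2
  have hτx : ∀ u v : H, Integrable (fun α => (⟪τ α, u⟫ : 𝕜) * ⟪v, x α⟫) μ := by
    intro u v
    have heq : (fun α => (⟪τ α, u⟫ : 𝕜) * ⟪v, x α⟫)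
        = fun α => (starRingEnd 𝕜) ((⟪x α, v⟫ : 𝕜) * ⟪u, τ α⟫) := by
      funext α; rw [map_mul, inner_conj_symm, inner_conj_symm]; ring
    rw [heq]; exact hci _ (hi1 v u)
  have hτy : ∀ u v : H, Integrable (fun α => (⟪τ α, u⟫ : 𝕜) * ⟪v, y α⟫) μ := by
    intro u v
    have heq : (fun α => (⟪τ α, u⟫ : 𝕜) * ⟪v, y α⟫)
        = fun α => (starRingEnd 𝕜) ((⟪y α, v⟫ : 𝕜) * ⟪u, τ α⟫) := by
      funext α; rw [map_mul, inner_conj_symm, inner_conj_symm]; ring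
    rw [heq]; exact hci _ (hi3 v u)
  have hωx : ∀ u v : H, Integrable (fun α => (⟪ω α, u⟫ : 𝕜) * ⟪v, x α⟫) μ := by
    intro u v
    have heq : (fun α => (⟪ω α, u⟫ : 𝕜) * ⟪v, x α⟫)
        = fun α => (starRingEnd 𝕜) ((⟪x α, v⟫ : 𝕜) * ⟪u, ω α⟫) := by
      funext α; rw [map_mul, inner_conj_symm, inner_conj_symm]; ring
    rw [heq]; exact hci _ (hi2 v u)
  have hωy : ∀ u v : H, Integrable (fun α => (⟪ω α, u⟫ : 𝕜) * ⟪v, y α⟫) μ := by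
    intro u v
    have heq : (fun α => (⟪ω α, u⟫ : 𝕜) * ⟪v, y α⟫)
        = fun α => (starRingEnd 𝕜) ((⟪y α, v⟫ : 𝕜) * ⟪u, ω α⟫) := by
      funext α; rw [map_mul, inner_conj_symm, inner_conj_symm]; ring
    rw [heq]; exact hci _ (hi4 v u)
  -- vanishing cross integrals (conjugates of the orthogonality hypotheses)
  have zyτ : ∀ b c : H, (∫ α, (⟪y α, b⟫ : 𝕜) * ⟪c, τ α⟫ ∂μ) = 0 := by
    intro b c
    have heq : (fun α => (⟪y α, b⟫ : 𝕜) * ⟪c, τ α⟫)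
        = fun α => (starRingEnd 𝕜) ((⟪τ α, c⟫ : 𝕜) * ⟪b, y α⟫) := by
      funext α; rw [map_mul, inner_conj_symm, inner_conj_symm]; ring
    rw [heq, integral_conj, ho2 c b, map_zero]
  have zωx : ∀ a d : H, (∫ α, (⟪ω α, a⟫ : 𝕜) * ⟪d, x α⟫ ∂μ) = 0 := by
    intro a d
    have heq : (fun α => (⟪ω α, a⟫ : 𝕜) * ⟪d, x α⟫)
        = fun α => (starRingEnd 𝕜) ((⟪x α, d⟫ : 𝕜) * ⟪a, ω α⟫) := by
      funext α; rw [map_mul, inner_conj_symm, inner_conj_symm]; ring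
    rw [heq, integral_conj, ho1 d a, map_zero]
  refine ⟨⟨hpx.add hpy, pos_add_isUnit SxInv SyInv Sx hpx hpy hx2, ?_⟩, ?_⟩
  · -- frame operator identity
    intro h u
    have heq : (fun α => (⟪SxInv (x α) + SyInv (y α), h⟫ : 𝕜) * ⟪u, SxInv (τ α) + SyInv (ω α)⟫)
        = fun α => ((⟪x α, SxInv h⟫ : 𝕜) * ⟪SxInv u, τ α⟫ + (⟪x α, SxInv h⟫ : 𝕜) * ⟪SyInv u, ω α⟫)
            + ((⟪y α, SyInv h⟫ : 𝕜) * ⟪SxInv u, τ α⟫ + (⟪y α, SyInv h⟫ : 𝕜) * ⟪SyInv u, ω α⟫) := by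
      funext α
      rw [inner_add_left, inner_add_right, symx (x α) h, symy (y α) h,
        ← symx u (τ α), ← symy u (ω α)]
      ring
    have I12 : Integrable (fun α => (⟪x α, SxInv h⟫ : 𝕜) * ⟪SxInv u, τ α⟫
        + (⟪x α, SxInv h⟫ : 𝕜) * ⟪SyInv u, ω α⟫) μ :=
      (hi1 (SxInv h) (SxInv u)).add (hi2 (SxInv h) (SyInv u))
    have I34 : Integrable (fun α => (⟪y α, SyInv h⟫ : 𝕜) * ⟪SxInv u, τ α⟫
        + (⟪y α, SyInv h⟫ : 𝕜) * ⟪SyInv u, ω α⟫) μ :=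
      (hi3 (SyInv h) (SxInv u)).add (hi4 (SyInv h) (SyInv u))
    rw [heq, integral_add I12 I34,
      integral_add (hi1 (SxInv h) (SxInv u)) (hi2 (SxInv h) (SyInv u)),
      integral_add (hi3 (SyInv h) (SxInv u)) (hi4 (SyInv h) (SyInv u)),
      ← hSx (SxInv h) (SxInv u), ← hSy (SyInv h) (SyInv u),
      ho1 (SxInv h) (SyInv u), zyτ (SyInv h) (SxInv u), sxi h, syi h]
    simp only [ContinuousLinearMap.add_apply, inner_add_right, add_zero, zero_add]
    rw [symx u h, symy u h]
  · intro h u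
    refine ⟨?_, ?_, ?_, ?_⟩
    · have heq : (fun α => (⟪x α, h⟫ : 𝕜) * ⟪u, SxInv (τ α) + SyInv (ω α)⟫)
          = fun α => (⟪x α, h⟫ : 𝕜) * ⟪SxInv u, τ α⟫ + (⟪x α, h⟫ : 𝕜) * ⟪SyInv u, ω α⟫ := by
        funext α; rw [inner_add_right, ← symx u (τ α), ← symy u (ω α)]; ring
      rw [heq, integral_add (hi1 h (SxInv u)) (hi2 h (SyInv u)), ← hSx h (SxInv u),
        ho1 h (SyInv u), add_zero, symx u (Sx h), isx h]
    · have heq : (fun α => (⟪τ α, h⟫ : 𝕜) * ⟪u, SxInv (x α) + SyInv (y α)⟫)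
          = fun α => (⟪τ α, h⟫ : 𝕜) * ⟪SxInv u, x α⟫ + (⟪τ α, h⟫ : 𝕜) * ⟪SyInv u, y α⟫ := by
        funext α; rw [inner_add_right, ← symx u (x α), ← symy u (y α)]; ring
      rw [heq, integral_add (hτx h (SxInv u)) (hτy h (SyInv u)), ← hSx' h (SxInv u),
        ho2 h (SyInv u), add_zero, symx u (Sx h), isx h]
    · have heq : (fun α => (⟪y α, h⟫ : 𝕜) * ⟪u, SxInv (τ α) + SyInv (ω α)⟫)
          = fun α => (⟪y α, h⟫ : 𝕜) * ⟪SxInv u, τ α⟫ + (⟪y α, h⟫ : 𝕜) * ⟪SyInv u, ω α⟫ := by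
        funext α; rw [inner_add_right, ← symx u (τ α), ← symy u (ω α)]; ring
      rw [heq, integral_add (hi3 h (SxInv u)) (hi4 h (SyInv u)), zyτ h (SxInv u),
        ← hSy h (SyInv u), zero_add, symy u (Sy h), isy h]
    · have heq : (fun α => (⟪ω α, h⟫ : 𝕜) * ⟪u, SxInv (x α) + SyInv (y α)⟫)
          = fun α => (⟪ω α, h⟫ : 𝕜) * ⟪SxInv u, x α⟫ + (⟪ω α, h⟫ : 𝕜) * ⟪SyInv u, y α⟫ := by
        funext α; rw [inner_add_right, ← symx u (x α), ← symy u (y α)]; ring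
      rw [heq, integral_add (hωx h (SxInv u)) (hωy h (SyInv u)), zωx h (SxInv u),
        ← hSy' h (SyInv u), zero_add, symy u (Sy h), isy h]
end

section
/- Let ({x_α},{τ_α}) and ({y_α},{ω_α}) be Parseval weak continuous frames for a Hilbert space H (S_{x,τ} = I = S_{y,ω}) which are orthogonal (∫ ⟨h,x_α⟩ω_α dμ = 0 = ∫ ⟨h,τ_α⟩y_α dμ weakly for all h). If A, B, C, D ∈ B(H) satisfy CA* + DB* = I_H, then ({A x_α + B y_α}, {C τ_α + D ω_α}) is a Parseval weak continuous frame: ∫ ⟨h, A x_α + B y_α⟩ (C τ_α + D ω_α) dμ(α) = h weakly for all h ∈ H. -/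
open MeasureTheory ContinuousLinearMap

variable {𝕜 : Type*} [RCLike 𝕜]

local notation "⟪" x ", " y "⟫" => @inner 𝕜 _ _ x y

/-- if `({x_α},{τ_α})` and `({y_α},{ω_α})` are orthogonal Parseval weak
continuous frames and `C A* + D B* = I`, then `({A x_α + B y_α}, {C τ_α + D ω_α})` is a
Parseval weak continuous frame: `∫ ⟨h, A x_α + B y_α⟩ (C τ_α + D ω_α) dμ = h` weakly.
(The paper's `⟨u,v⟩` is `⟪v, u⟫` in Mathlib's convention.) -/
theorem extension_stmt19
    {H : Type*} [NormedAddCommGroup H] [InnerProductSpace 𝕜 H] [CompleteSpace H]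
    {Ω : Type*} [MeasurableSpace Ω] (μ : Measure Ω)
    (x τ y ω : Ω → H)
    -- Parseval: `S_{x,τ} = I = S_{y,ω}` weakly
    (hPx : ∀ h u : H, ∫ α, ⟪x α, h⟫ * ⟪u, τ α⟫ ∂μ = ⟪u, h⟫)
    (hPy : ∀ h u : H, ∫ α, ⟪y α, h⟫ * ⟪u, ω α⟫ ∂μ = ⟪u, h⟫)
    -- orthogonality (weakly)
    (ho1 : ∀ h u : H, ∫ α, ⟪x α, h⟫ * ⟪u, ω α⟫ ∂μ = (0 : 𝕜))
    (ho2 : ∀ h u : H, ∫ α, ⟪τ α, h⟫ * ⟪u, y α⟫ ∂μ = (0 : 𝕜))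
    -- integrability of all cross pairings
    (hi1 : ∀ u v : H, Integrable (fun α => (⟪x α, u⟫ : 𝕜) * ⟪v, τ α⟫) μ)
    (hi2 : ∀ u v : H, Integrable (fun α => (⟪x α, u⟫ : 𝕜) * ⟪v, ω α⟫) μ)
    (hi3 : ∀ u v : H, Integrable (fun α => (⟪y α, u⟫ : 𝕜) * ⟪v, τ α⟫) μ)
    (hi4 : ∀ u v : H, Integrable (fun α => (⟪y α, u⟫ : 𝕜) * ⟪v, ω α⟫) μ)
    (A B C D : H →L[𝕜] H)
    (hABCD : C.comp (adjoint A) + D.comp (adjoint B) = ContinuousLinearMap.id 𝕜 H) :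
    ∀ h u : H,
      ∫ α, ⟪A (x α) + B (y α), h⟫ * ⟪u, C (τ α) + D (ω α)⟫ ∂μ = ⟪u, h⟫ := by
  intro h u
  set a := adjoint A h
  set b := adjoint B h
  set c := adjoint C u
  set d := adjoint D u
  have key : ∀ α, ⟪A (x α) + B (y α), h⟫ * ⟪u, C (τ α) + D (ω α)⟫ =
      (⟪x α, a⟫ * ⟪c, τ α⟫ + ⟪x α, a⟫ * ⟪d, ω α⟫) +
      (⟪y α, b⟫ * ⟪c, τ α⟫ + ⟪y α, b⟫ * ⟪d, ω α⟫) := by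
    intro α
    rw [inner_add_left, inner_add_right, ← adjoint_inner_right A, ← adjoint_inner_right B,
      ← adjoint_inner_left C, ← adjoint_inner_left D]
    ring
  rw [MeasureTheory.integral_congr_ae (Filter.Eventually.of_forall key)]
  have I12 : Integrable (fun α => (⟪x α, a⟫ : 𝕜) * ⟪c, τ α⟫ + ⟪x α, a⟫ * ⟪d, ω α⟫) μ :=
    (hi1 a c).add (hi2 a d)
  have I34 : Integrable (fun α => (⟪y α, b⟫ : 𝕜) * ⟪c, τ α⟫ + ⟪y α, b⟫ * ⟪d, ω α⟫) μ :=
    (hi3 b c).add (hi4 b d)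
  rw [integral_add I12 I34, integral_add (hi1 a c) (hi2 a d), integral_add (hi3 b c) (hi4 b d)]
  have h3 : ∫ α, ⟪y α, b⟫ * ⟪c, τ α⟫ ∂μ = 0 := by
    rw [show (fun α => (⟪y α, b⟫ : 𝕜) * ⟪c, τ α⟫) =
        fun α => (starRingEnd 𝕜) ((⟪τ α, c⟫ : 𝕜) * ⟪b, y α⟫) from funext fun α => by
          rw [map_mul, inner_conj_symm, inner_conj_symm, mul_comm],
      integral_conj, ho2 c b, map_zero]
  rw [hPx a c, ho1 a d, h3, hPy b d]
  rw [adjoint_inner_left, adjoint_inner_left]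
  have key2 := congrArg (fun T : H →L[𝕜] H => (⟪u, T h⟫ : 𝕜)) hABCD
  simpa [inner_add_right] using key2
end
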